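/- There is a constant C > 0 such that for every t ∈ [0,T], every h ∈ [0,T−t], and every continuous function Y⁰ : [t,t+h] → ℝ satisfying the backward integral equation Y⁰_s = ∫_s^{t+h} inf_{α∈A} F(r, Y⁰_r, α) dr for all s ∈ [t,t+h], one has ∫_t^{t+h} |Y⁰_s| ds ≤ C h^{3/2}. -/

import Mathlib

open Set Filter Matrix
open scoped RealInnerProductSpace

noncomputable section

/-- `ℝⁿ` with the Euclidean norm. -/
abbrev Vec (n : ℕ) := EuclideanSpace ℝ (Fin n)

/-- The time derivative `∂_s φ(s,x)`. -/
def timeDeriv {n : ℕ} (φ : ℝ × Vec n → ℝ) (s : ℝ) (x : Vec n) : ℝ :=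
  deriv (fun τ => φ (τ, x)) s

/-- The spatial gradient `D_x φ(s,x)` as a vector of `ℝⁿ`. -/
def spaceGrad {n : ℕ} (φ : ℝ × Vec n → ℝ) (s : ℝ) (x : Vec n) : Vec n :=
  (EuclideanSpace.equiv (Fin n) ℝ).symm
    (fun i => fderiv ℝ (fun y => φ (s, y)) x (EuclideanSpace.single i 1))

/-- The spatial Hessian `D²_x φ(s,x)` as an `n × n` matrix. -/
def spaceHess {n : ℕ} (φ : ℝ × Vec n → ℝ) (s : ℝ) (x : Vec n) :
    Matrix (Fin n) (Fin n) ℝ :=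
  Matrix.of fun i j =>
    fderiv ℝ (fun y => fderiv ℝ (fun y' => φ (s, y')) y (EuclideanSpace.single j 1)) x
      (EuclideanSpace.single i 1)

/-- `φ` is `C³` with bounded derivatives of orders 1–3. -/
def IsTestFn {n : ℕ} (φ : ℝ × Vec n → ℝ) : Prop :=
  ContDiff ℝ 3 φ ∧
    ∀ k : ℕ, 1 ≤ k → k ≤ 3 → ∃ M, ∀ p : ℝ × Vec n, ‖iteratedFDeriv ℝ k φ p‖ ≤ M

attribute [local instance] Matrix.frobeniusSeminormedAddCommGroup

set_option maxHeartbeats 1000000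

lemma grad_coord {n : ℕ} {φ : ℝ × Vec n → ℝ} (hφ : ContDiff ℝ 3 φ) (s : ℝ) (x : Vec n)
    (v : Vec n) :
    fderiv ℝ (fun y => φ (s, y)) x v = fderiv ℝ φ (s, x) (0, v) := by
  have h1 : HasFDerivAt (fun y : Vec n => (s, y)) (ContinuousLinearMap.inr ℝ ℝ (Vec n)) x :=
    hasFDerivAt_prodMk_right s x
  have h2 : HasFDerivAt φ (fderiv ℝ φ (s, x)) (s, x) :=
    ((hφ.differentiable (by norm_num)) (s, x)).hasFDerivAt
  have h3 : HasFDerivAt (fun y => φ (s, y))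
      ((fderiv ℝ φ (s, x)).comp (ContinuousLinearMap.inr ℝ ℝ (Vec n))) x := h2.comp x h1
  rw [h3.fderiv]; rfl

lemma hess_entry {n : ℕ} {φ : ℝ × Vec n → ℝ} (hφ : ContDiff ℝ 3 φ) (s : ℝ) (x : Vec n)
    (v w : Vec n) :
    fderiv ℝ (fun y => fderiv ℝ (fun y' => φ (s, y')) y w) x v
      = fderiv ℝ (fderiv ℝ φ) (s, x) (0, v) (0, w) := by
  have hD2 : Differentiable ℝ (fderiv ℝ φ) :=
    (hφ.fderiv_right (m := 2) (by norm_num)).differentiable (by norm_num)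
  have h1 : HasFDerivAt (fun y : Vec n => (s, y)) (ContinuousLinearMap.inr ℝ ℝ (Vec n)) x :=
    hasFDerivAt_prodMk_right s x
  have h2 : HasFDerivAt (fderiv ℝ φ) (fderiv ℝ (fderiv ℝ φ) (s, x)) (s, x) :=
    (hD2 (s, x)).hasFDerivAt
  have h3 : HasFDerivAt (fun y : Vec n => fderiv ℝ φ (s, y))
      ((fderiv ℝ (fderiv ℝ φ) (s, x)).comp (ContinuousLinearMap.inr ℝ ℝ (Vec n))) x :=
    h2.comp x h1
  have h4 : HasFDerivAt (fun y : Vec n => fderiv ℝ φ (s, y) ((0 : ℝ × Vec n).1, w))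
      ((ContinuousLinearMap.apply ℝ ℝ ((0:ℝ), w)).comp
        ((fderiv ℝ (fderiv ℝ φ) (s, x)).comp (ContinuousLinearMap.inr ℝ ℝ (Vec n)))) x :=
    ((ContinuousLinearMap.apply ℝ ℝ ((0:ℝ), w)).hasFDerivAt).comp x h3
  have hrw : (fun y => fderiv ℝ (fun y' => φ (s, y')) y w)
      = fun y : Vec n => fderiv ℝ φ (s, y) ((0 : ℝ × Vec n).1, w) := by
    funext y
    simpa using grad_coord hφ s y w
  rw [hrw, h4.fderiv]
  rfl

lemma trace_formula {n d : ℕ} (S : Matrix (Fin n) (Fin d) ℝ) (H : Matrix (Fin n) (Fin n) ℝ) :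
    Matrix.trace (S * Sᵀ * H) = ∑ i, ∑ k, (∑ j, S i j * S k j) * H k i := by
  simp [Matrix.trace, Matrix.diag, Matrix.mul_apply, Matrix.transpose_apply]

lemma exp_aux {u : ℝ} (hu : 0 ≤ u) : Real.exp u - 1 ≤ u * Real.exp u := by
  have h := Real.add_one_le_exp (-u)
  have hprod : Real.exp u * Real.exp (-u) = 1 := by rw [← Real.exp_add]; simp
  nlinarith [mul_le_mul_of_nonneg_left h (Real.exp_pos u).le, hprod]



/-- There is a constant `C > 0` such that for every `t ∈ [0,T]`,
`h ∈ [0, T - t]` and every continuous solution `Y⁰` of the backward integral equation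
`Y⁰_s = ∫_s^{t+h} inf_{α ∈ A} F(r, Y⁰_r, α) dr` on `[t, t+h]`, one has
`∫_t^{t+h} |Y⁰_s| ds ≤ C h^{3/2}`. -/
theorem ode_Y0_estimate
    {n d : ℕ} (hn : 1 ≤ n) (hd : 1 ≤ d)
    {A : Type*} [MetricSpace A] [CompactSpace A] [Nonempty A]
    (T : ℝ) (hT : 0 < T) (x : Vec n)
    (a : ℝ → Vec n → A → Vec n) (σ : ℝ → Vec n → A → Matrix (Fin n) (Fin d) ℝ)
    (f : ℝ → Vec n → ℝ → Vec d → A → ℝ)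
    (hacont : ContinuousOn (fun q : ℝ × Vec n × A => a q.1 q.2.1 q.2.2)
      (Set.Icc 0 T ×ˢ (Set.univ : Set (Vec n × A))))
    (hσcont : ContinuousOn (fun q : ℝ × Vec n × A => σ q.1 q.2.1 q.2.2)
      (Set.Icc 0 T ×ˢ (Set.univ : Set (Vec n × A))))
    (hfcont : ContinuousOn
      (fun q : ℝ × Vec n × ℝ × Vec d × A => f q.1 q.2.1 q.2.2.1 q.2.2.2.1 q.2.2.2.2)
      (Set.Icc 0 T ×ˢ (Set.univ : Set (Vec n × ℝ × Vec d × A))))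
    (C₀ ρ kf : ℝ) (hC₀ : 0 < C₀) (hρ : 0 < ρ) (hkf : 0 < kf)
    (hfb : ∀ t ∈ Set.Icc (0:ℝ) T, ∀ (x' : Vec n) (α : A),
      |f t x' 0 0 α| ≤ C₀ * (1 + ‖x'‖ ^ ρ))
    (hflip : ∀ t ∈ Set.Icc (0:ℝ) T, ∀ (x' : Vec n) (y y' : ℝ) (z z' : Vec d) (α : A),
      |f t x' y' z' α - f t x' y z α| ≤ kf * (|y' - y| + ‖z' - z‖))
    (φ : ℝ × Vec n → ℝ) (hφ : IsTestFn φ)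
    (F : ℝ → ℝ → A → ℝ)
    (hF : ∀ (s : ℝ) (y : ℝ) (α : A),
      F s y α = timeDeriv φ s x
        + (1 / 2) * Matrix.trace (σ s x α * (σ s x α)ᵀ * spaceHess φ s x)
        + ⟪spaceGrad φ s x, a s x α⟫
        + f s x (φ (s, x) + y)
            ((EuclideanSpace.equiv (Fin d) ℝ).symm
              (fun j => ∑ i, spaceGrad φ s x i * σ s x α i j)) α) :
    ∃ C > 0, ∀ t ∈ Set.Icc (0:ℝ) T, ∀ h ∈ Set.Icc (0:ℝ) (T - t),
      ∀ Y : ℝ → ℝ, ContinuousOn Y (Set.Icc t (t + h)) →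
        (∀ s ∈ Set.Icc t (t + h), Y s = ∫ r in s..(t + h), ⨅ α : A, F r (Y r) α) →
        (∫ s in t..(t + h), |Y s|) ≤ C * h ^ ((3 : ℝ) / 2) := by
  obtain ⟨hφ3, -⟩ := hφ
  -- continuity of the φ-derived coefficients
  have c_sx : Continuous (fun s : ℝ => ((s, x) : ℝ × Vec n)) :=
    continuous_id.prodMk continuous_const
  have c_time : Continuous (fun s => timeDeriv φ s x) :=
    (hφ3.comp (contDiff_id.prodMk contDiff_const)).continuous_deriv (by norm_num)
  have cD : Continuous (fderiv ℝ φ) := hφ3.continuous_fderiv (by norm_num)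
  have c_grad_i : ∀ i, Continuous (fun s => spaceGrad φ s x i) := by
    intro i
    have : (fun s => spaceGrad φ s x i)
        = fun s => fderiv ℝ φ (s, x) (0, EuclideanSpace.single i 1) :=
      funext fun s => grad_coord hφ3 s x _
    rw [this]
    exact (cD.comp c_sx).clm_apply continuous_const
  have c_grad : Continuous (fun s => spaceGrad φ s x) := by
    have : Continuous (fun s => (fun i => fderiv ℝ (fun y => φ (s, y)) x
        (EuclideanSpace.single i 1) : Fin n → ℝ)) := by
      apply continuous_pi
      intro i
      exact c_grad_i i
    exact (EuclideanSpace.equiv (Fin n) ℝ).symm.continuous.comp this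
  have c_hess_ij : ∀ i j, Continuous (fun s => spaceHess φ s x i j) := by
    have cD2 : Continuous (fderiv ℝ (fderiv ℝ φ)) :=
      (hφ3.fderiv_right (m := 2) (by norm_num)).continuous_fderiv (by norm_num)
    intro i j
    have : (fun s => spaceHess φ s x i j)
        = fun s => fderiv ℝ (fderiv ℝ φ) (s, x) (0, EuclideanSpace.single i 1)
            (0, EuclideanSpace.single j 1) :=
      funext fun s => hess_entry hφ3 s x _ _
    rw [this]
    exact ((cD2.comp c_sx).clm_apply continuous_const).clm_apply continuous_const
  -- compact parameter set
  set K : Set (ℝ × A) := Set.Icc 0 T ×ˢ (Set.univ : Set A) with hKdef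
  have hKcomp : IsCompact K := isCompact_Icc.prod isCompact_univ
  -- continuity of coefficients on K
  have haK : ContinuousOn (fun p : ℝ × A => a p.1 x p.2) K := by
    apply hacont.comp (continuous_fst.prodMk
      (continuous_const.prodMk continuous_snd)).continuousOn
    intro p hp; exact ⟨hp.1, trivial⟩
  have hσK : ContinuousOn (fun p : ℝ × A => σ p.1 x p.2) K := by
    apply hσcont.comp (continuous_fst.prodMk
      (continuous_const.prodMk continuous_snd)).continuousOn
    intro p hp; exact ⟨hp.1, trivial⟩
  have hσKij : ∀ i j, ContinuousOn (fun p : ℝ × A => σ p.1 x p.2 i j) K := by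
    intro i j
    have hc : Continuous (fun M : Matrix (Fin n) (Fin d) ℝ => M i j) :=
      (continuous_apply j).comp (continuous_apply i)
    exact hc.comp_continuousOn hσK
  -- trace term
  have c_tr : ContinuousOn
      (fun p : ℝ × A => Matrix.trace (σ p.1 x p.2 * (σ p.1 x p.2)ᵀ * spaceHess φ p.1 x)) K := by
    have heq : (fun p : ℝ × A => Matrix.trace (σ p.1 x p.2 * (σ p.1 x p.2)ᵀ * spaceHess φ p.1 x))
        = fun p : ℝ × A => ∑ i, ∑ k, (∑ j, σ p.1 x p.2 i j * σ p.1 x p.2 k j)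
            * spaceHess φ p.1 x k i :=
      funext fun p => trace_formula _ _
    rw [heq]
    apply continuousOn_finset_sum
    intro i _
    apply continuousOn_finset_sum
    intro k _
    apply ContinuousOn.mul
    · apply continuousOn_finset_sum
      intro j _
      exact (hσKij i j).mul (hσKij k j)
    · exact ((c_hess_ij k i).comp continuous_fst).continuousOn
  -- inner product term
  have c_inn : ContinuousOn (fun p : ℝ × A => ⟪spaceGrad φ p.1 x, a p.1 x p.2⟫) K := by
    exact continuous_inner.comp_continuousOn
      (((c_grad.comp continuous_fst).continuousOn).prodMk haK)
  -- z term
  have c_z : ContinuousOn (fun p : ℝ × A =>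
      (EuclideanSpace.equiv (Fin d) ℝ).symm
        (fun j => ∑ i, spaceGrad φ p.1 x i * σ p.1 x p.2 i j)) K := by
    apply (EuclideanSpace.equiv (Fin d) ℝ).symm.continuous.comp_continuousOn
    apply continuousOn_pi.mpr
    intro j
    apply continuousOn_finset_sum
    intro i _
    exact (((c_grad_i i).comp continuous_fst).continuousOn).mul (hσKij i j)
  -- f term
  have c_f : ContinuousOn (fun p : ℝ × A =>
      f p.1 x (φ (p.1, x) + 0)
        ((EuclideanSpace.equiv (Fin d) ℝ).symm
          (fun j => ∑ i, spaceGrad φ p.1 x i * σ p.1 x p.2 i j)) p.2) K := by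
    have hmap : ContinuousOn (fun p : ℝ × A =>
        ((p.1, (x, (φ (p.1, x) + 0, ((EuclideanSpace.equiv (Fin d) ℝ).symm
          (fun j => ∑ i, spaceGrad φ p.1 x i * σ p.1 x p.2 i j), p.2))))
          : ℝ × Vec n × ℝ × Vec d × A)) K := by
      apply ContinuousOn.prodMk (continuousOn_fst)
      apply ContinuousOn.prodMk (continuousOn_const)
      apply ContinuousOn.prodMk
      · exact ((hφ3.continuous.comp c_sx).comp continuous_fst).continuousOn.add
          continuousOn_const
      · exact c_z.prodMk continuousOn_snd
    have hmaps : Set.MapsTo (fun p : ℝ × A =>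
        ((p.1, (x, (φ (p.1, x) + 0, ((EuclideanSpace.equiv (Fin d) ℝ).symm
          (fun j => ∑ i, spaceGrad φ p.1 x i * σ p.1 x p.2 i j), p.2))))
          : ℝ × Vec n × ℝ × Vec d × A)) K
        (Set.Icc 0 T ×ˢ (Set.univ : Set (Vec n × ℝ × Vec d × A))) :=
      fun p hp => ⟨hp.1, trivial⟩
    exact hfcont.comp hmap hmaps
  -- the function (s, α) ↦ F s 0 α is continuous on K
  have hGc : ContinuousOn (fun p : ℝ × A => F p.1 0 p.2) K := by
    have : (fun p : ℝ × A => F p.1 0 p.2)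
        = fun p : ℝ × A => timeDeriv φ p.1 x
          + (1 / 2) * Matrix.trace (σ p.1 x p.2 * (σ p.1 x p.2)ᵀ * spaceHess φ p.1 x)
          + ⟪spaceGrad φ p.1 x, a p.1 x p.2⟫
          + f p.1 x (φ (p.1, x) + 0)
              ((EuclideanSpace.equiv (Fin d) ℝ).symm
                (fun j => ∑ i, spaceGrad φ p.1 x i * σ p.1 x p.2 i j)) p.2 :=
      funext fun p => hF p.1 0 p.2
    rw [this]
    exact ((((c_time.comp continuous_fst).continuousOn.add
      (continuousOn_const.mul c_tr)).add c_inn).add c_f)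
  obtain ⟨M, hM⟩ := hKcomp.exists_bound_of_continuousOn hGc
  have hM0 : 0 ≤ M := by
    have h0K : ((0 : ℝ), Classical.arbitrary A) ∈ K := ⟨⟨le_rfl, hT.le⟩, trivial⟩
    exact (norm_nonneg _).trans (hM _ h0K)
  -- Lipschitz bound in y
  have hFb : ∀ s ∈ Set.Icc (0:ℝ) T, ∀ (y : ℝ) (α : A), |F s y α| ≤ M + kf * |y| := by
    intro s hs y α
    have hlip : |F s y α - F s 0 α| ≤ kf * |y| := by
      rw [hF s y α, hF s 0 α]
      have heq : (timeDeriv φ s x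
          + (1 / 2) * Matrix.trace (σ s x α * (σ s x α)ᵀ * spaceHess φ s x)
          + ⟪spaceGrad φ s x, a s x α⟫
          + f s x (φ (s, x) + y) ((EuclideanSpace.equiv (Fin d) ℝ).symm
              (fun j => ∑ i, spaceGrad φ s x i * σ s x α i j)) α)
          - (timeDeriv φ s x
          + (1 / 2) * Matrix.trace (σ s x α * (σ s x α)ᵀ * spaceHess φ s x)
          + ⟪spaceGrad φ s x, a s x α⟫
          + f s x (φ (s, x) + 0) ((EuclideanSpace.equiv (Fin d) ℝ).symm
              (fun j => ∑ i, spaceGrad φ s x i * σ s x α i j)) α)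
          = f s x (φ (s, x) + y) ((EuclideanSpace.equiv (Fin d) ℝ).symm
              (fun j => ∑ i, spaceGrad φ s x i * σ s x α i j)) α
          - f s x (φ (s, x) + 0) ((EuclideanSpace.equiv (Fin d) ℝ).symm
              (fun j => ∑ i, spaceGrad φ s x i * σ s x α i j)) α := by ring
      rw [heq]
      have := hflip s hs x (φ (s, x) + 0) (φ (s, x) + y)
        ((EuclideanSpace.equiv (Fin d) ℝ).symm
          (fun j => ∑ i, spaceGrad φ s x i * σ s x α i j))
        ((EuclideanSpace.equiv (Fin d) ℝ).symm
          (fun j => ∑ i, spaceGrad φ s x i * σ s x α i j)) α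
      simpa using this
    have hbase : |F s 0 α| ≤ M := by
      have := hM (s, α) ⟨hs, trivial⟩
      simpa [Real.norm_eq_abs] using this
    calc |F s y α| = |F s 0 α + (F s y α - F s 0 α)| := by ring_nf
      _ ≤ |F s 0 α| + |F s y α - F s 0 α| := abs_add_le _ _
      _ ≤ M + kf * |y| := add_le_add hbase hlip
  -- the constant
  refine ⟨M * Real.exp (kf * T) * Real.sqrt T + 1, by positivity, ?_⟩
  intro t ht h hh Y hYc hYeq
  have h0 : 0 ≤ h := hh.1
  have hth : t ≤ t + h := by linarith
  have hsubT : Set.Icc t (t + h) ⊆ Set.Icc (0:ℝ) T := by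
    intro r hr
    constructor
    · linarith [ht.1, hr.1]
    · linarith [hr.2, hh.2]
  set B : ℝ → ℝ := fun r => M + kf * |Y r| with hBdef
  have hBc : ContinuousOn B (Set.Icc t (t + h)) :=
    continuousOn_const.add (continuousOn_const.mul hYc.abs)
  have hBnn : ∀ r, 0 ≤ B r := fun r => by positivity
  have hBint : ∀ s ∈ Set.Icc t (t + h), IntervalIntegrable B MeasureTheory.volume s (t + h) := by
    intro s hs
    exact (hBc.mono (Set.Icc_subset_Icc hs.1 le_rfl)).intervalIntegrable_of_Icc hs.2
  set u : ℝ → ℝ := fun s => ∫ r in s..(t + h), B r with hudef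
  -- |Y s| ≤ u s
  have key : ∀ s ∈ Set.Icc t (t + h), |Y s| ≤ u s := by
    intro s hs
    rw [hYeq s hs]
    have hae : ∀ᵐ r ∂(MeasureTheory.volume.restrict (Set.uIoc s (t + h))),
        ‖⨅ α : A, F r (Y r) α‖ ≤ B r := by
      refine (MeasureTheory.ae_restrict_iff' measurableSet_uIoc).mpr
        (MeasureTheory.ae_of_all _ ?_)
      intro r hr
      rw [Set.uIoc_of_le hs.2] at hr
      have hrIcc : r ∈ Set.Icc t (t + h) := ⟨hs.1.trans hr.1.le, hr.2⟩
      have hr0T : r ∈ Set.Icc (0:ℝ) T := hsubT hrIcc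
      have hbd : ∀ α : A, |F r (Y r) α| ≤ B r := fun α => hFb r hr0T (Y r) α
      have hbdd : BddBelow (Set.range fun α : A => F r (Y r) α) := by
        refine ⟨-(B r), ?_⟩
        rintro v ⟨α, rfl⟩
        exact (abs_le.1 (hbd α)).1
      rw [Real.norm_eq_abs, abs_le]
      constructor
      · exact le_ciInf fun α => (abs_le.1 (hbd α)).1
      · exact (ciInf_le hbdd (Classical.arbitrary A)).trans ((abs_le.1 (hbd (Classical.arbitrary A))).2)
    have hle := intervalIntegral.norm_integral_le_abs_of_norm_le hae (hBint s hs)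
    have habs : |∫ r in s..(t + h), B r| = u s := by
      rw [hudef]
      exact abs_of_nonneg (intervalIntegral.integral_nonneg hs.2 (fun r _ => hBnn r))
    calc |∫ r in s..(t + h), ⨅ α : A, F r (Y r) α|
        = ‖∫ r in s..(t + h), ⨅ α : A, F r (Y r) α‖ := (Real.norm_eq_abs _).symm
      _ ≤ |∫ r in s..(t + h), B r| := hle
      _ = u s := habs
  -- FTC: derivative of u
  have hud : ∀ s ∈ Set.Icc t (t + h), HasDerivWithinAt u (-(B s)) (Set.Icc t (t + h)) s := by
    intro s hs
    haveI : Fact (s ∈ Set.Icc t (t + h)) := ⟨hs⟩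
    have h1 : IntervalIntegrable B MeasureTheory.volume (t + h) s := (hBint s hs).symm
    have hmeas : StronglyMeasurableAtFilter B (nhdsWithin s (Set.Icc t (t + h))) := by
      exact ⟨Set.Icc t (t + h), self_mem_nhdsWithin,
        hBc.aestronglyMeasurable measurableSet_Icc⟩
    have hFTC := intervalIntegral.integral_hasDerivWithinAt_right
      (s := Set.Icc t (t + h)) (t := Set.Icc t (t + h)) h1 hmeas (hBc s hs)
    have : HasDerivWithinAt (fun r => -∫ x in (t + h)..r, B x) (-(B s))
        (Set.Icc t (t + h)) s := hFTC.neg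
    refine this.congr (fun r _ => ?_) ?_
    · show (∫ x in r..(t + h), B x) = -∫ x in (t + h)..r, B x
      rw [intervalIntegral.integral_symm r (t + h), neg_neg]
    · show (∫ x in s..(t + h), B x) = -∫ x in (t + h)..s, B x
      rw [intervalIntegral.integral_symm s (t + h), neg_neg]
  have huc : ContinuousOn u (Set.Icc t (t + h)) :=
    fun s hs => (hud s hs).continuousWithinAt
  -- monotone auxiliary function
  set v : ℝ → ℝ := fun s => (u s + M / kf) * Real.exp (kf * s) with hvdef
  have hvd : ∀ s ∈ Set.Ioo t (t + h), HasDerivAt v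
      (-(B s) * Real.exp (kf * s) + (u s + M / kf) * (Real.exp (kf * s) * kf)) s := by
    intro s hs
    have hmem : Set.Icc t (t + h) ∈ nhds s := Icc_mem_nhds hs.1 hs.2
    have hu : HasDerivAt u (-(B s)) s :=
      (hud s (Set.Ioo_subset_Icc_self hs)).hasDerivAt hmem
    have he : HasDerivAt (fun r : ℝ => Real.exp (kf * r)) (Real.exp (kf * s) * kf) s := by
      simpa using (((hasDerivAt_id s).const_mul kf).exp)
    exact (hu.add_const (M / kf)).mul he
  have hvmono : MonotoneOn v (Set.Icc t (t + h)) := by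
    apply monotoneOn_of_deriv_nonneg (convex_Icc t (t + h))
    · exact (huc.add continuousOn_const).mul
        (Real.continuous_exp.comp (continuous_const.mul continuous_id)).continuousOn
    · rw [interior_Icc]
      intro s hs
      exact (hvd s hs).differentiableAt.differentiableWithinAt
    · rw [interior_Icc]
      intro s hs
      rw [(hvd s hs).deriv]
      have hkey := key s (Set.Ioo_subset_Icc_self hs)
      have hE := Real.exp_pos (kf * s)
      have : -(B s) * Real.exp (kf * s) + (u s + M / kf) * (Real.exp (kf * s) * kf)
          = kf * Real.exp (kf * s) * (u s - |Y s|) := by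
        rw [hBdef]
        field_simp
        ring
      rw [this]
      have : 0 ≤ u s - |Y s| := by linarith
      positivity
  -- pointwise bound on |Y|
  have hYbd : ∀ s ∈ Set.Icc t (t + h), |Y s| ≤ M * Real.exp (kf * T) * h := by
    intro s hs
    have hv1 : v s ≤ v (t + h) := hvmono hs (Set.right_mem_Icc.mpr hth) hs.2
    have huend : u (t + h) = 0 := by rw [hudef]; simp
    have hexp : Real.exp (kf * (t + h)) = Real.exp (kf * (t + h - s)) * Real.exp (kf * s) := by
      rw [← Real.exp_add]; ring_nf
    have hvexp : (u s + M / kf) * Real.exp (kf * s)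
        ≤ (M / kf) * (Real.exp (kf * (t + h - s)) * Real.exp (kf * s)) := by
      have := hv1
      rw [hvdef] at this
      simp only [huend, zero_add] at this
      rw [← hexp]
      exact this
    have hEs := Real.exp_pos (kf * s)
    have hus : u s ≤ (M / kf) * (Real.exp (kf * (t + h - s)) - 1) := by
      have h2 : u s + M / kf ≤ (M / kf) * Real.exp (kf * (t + h - s)) :=
        le_of_mul_le_mul_right (by linarith [hvexp]) hEs
      linarith
    have harg0 : 0 ≤ kf * (t + h - s) := by
      have : 0 ≤ t + h - s := by linarith [hs.2]
      positivity
    have hargT : kf * (t + h - s) ≤ kf * T := by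
      have h1 : t + h - s ≤ T := by
        have := hsubT hs
        linarith [this.1, hh.2, ht.1, hs.1]
      nlinarith
    have hstep : Real.exp (kf * (t + h - s)) - 1
        ≤ (kf * (t + h - s)) * Real.exp (kf * (t + h - s)) := exp_aux harg0
    have hmono1 : Real.exp (kf * (t + h - s)) ≤ Real.exp (kf * T) := Real.exp_le_exp.mpr hargT
    have hths : t + h - s ≤ h := by linarith [hs.1]
    have hfinal : u s ≤ M * Real.exp (kf * T) * h := by
      have hEp := Real.exp_pos (kf * (t + h - s))
      have h3 : (M / kf) * (Real.exp (kf * (t + h - s)) - 1)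
          ≤ (M / kf) * ((kf * (t + h - s)) * Real.exp (kf * (t + h - s))) := by
        apply mul_le_mul_of_nonneg_left hstep (by positivity)
      have h4 : (M / kf) * ((kf * (t + h - s)) * Real.exp (kf * (t + h - s)))
          = M * (t + h - s) * Real.exp (kf * (t + h - s)) := by field_simp
      have h5 : M * (t + h - s) * Real.exp (kf * (t + h - s))
          ≤ M * h * Real.exp (kf * T) := by
        have hthsnn : 0 ≤ t + h - s := by linarith [hs.2]
        apply mul_le_mul (mul_le_mul le_rfl hths hthsnn hM0) hmono1 hEp.le (by positivity)
      calc u s ≤ (M / kf) * (Real.exp (kf * (t + h - s)) - 1) := hus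
        _ ≤ M * (t + h - s) * Real.exp (kf * (t + h - s)) := by rw [← h4]; exact h3
        _ ≤ M * h * Real.exp (kf * T) := h5
        _ = M * Real.exp (kf * T) * h := by ring
    exact (key s hs).trans hfinal
  -- conclusion
  have hintY : (∫ s in t..(t + h), |Y s|) ≤ M * Real.exp (kf * T) * h * h := by
    have h1 : (∫ s in t..(t + h), |Y s|) ≤ ∫ s in t..(t + h), M * Real.exp (kf * T) * h := by
      apply intervalIntegral.integral_mono_on hth
        (hYc.abs.intervalIntegrable_of_Icc hth) (intervalIntegrable_const)
      exact fun s hs => hYbd s hs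
    have h2 : (∫ s in t..(t + h), M * Real.exp (kf * T) * h)
        = M * Real.exp (kf * T) * h * h := by
      rw [intervalIntegral.integral_const]
      simp
      ring
    linarith
  have hpow : M * Real.exp (kf * T) * h * h
      ≤ (M * Real.exp (kf * T) * Real.sqrt T + 1) * h ^ ((3:ℝ)/2) := by
    have hsq : h ^ ((3:ℝ)/2) = h * Real.sqrt h := by
      rw [show (3:ℝ)/2 = 1 + 1/2 by norm_num, Real.rpow_add' h0 (by norm_num)]
      rw [Real.rpow_one, ← Real.sqrt_eq_rpow]
    rw [hsq]
    have hsqh : Real.sqrt h ≤ Real.sqrt T := Real.sqrt_le_sqrt (by linarith [hh.2, ht.1])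
    have hh2 : h ≤ Real.sqrt T * Real.sqrt h := by
      calc h = Real.sqrt h * Real.sqrt h := (Real.mul_self_sqrt h0).symm
        _ ≤ Real.sqrt T * Real.sqrt h :=
          mul_le_mul_of_nonneg_right hsqh (Real.sqrt_nonneg h)
    have hE := Real.exp_pos (kf * T)
    nlinarith [Real.sqrt_nonneg h, Real.sqrt_nonneg T, mul_nonneg (mul_nonneg hM0 hE.le) h0]
  linarith
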